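/- Let G ⊆ ℝⁿ be an open set and f : G → ℝ a continuous function. Then the set of points x ∈ G at which all n partial derivatives of f exist but f is not Fréchet differentiable at x is a meager (first category) set. -/

import Mathlib

open Metric Set Topology

namespace MeagrePartialsAux

variable {n : ℕ}

/-- Move `x` by `t` in the `i`-th coordinate direction. -/
def upd (x : Fin n → ℝ) (i : Fin n) (t : ℝ) : Fin n → ℝ := Function.update x i (x i + t)

lemma upd_zero (x : Fin n → ℝ) (i : Fin n) : upd x i 0 = x := by
  simp [upd]

lemma dist_upd_le (x : Fin n → ℝ) (i : Fin n) (t : ℝ) : dist (upd x i t) x ≤ |t| := by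
  rw [dist_pi_le_iff (abs_nonneg t)]
  intro j
  rcases eq_or_ne j i with rfl | hji
  · simp [upd, Real.dist_eq]
  · simp [upd, Function.update_of_ne hji]

lemma continuous_upd (i : Fin n) (t : ℝ) : Continuous (fun x : Fin n → ℝ => upd x i t) :=
  continuous_id.update i ((continuous_apply i).add continuous_const)

/-- Points at `edist ≥ 2/(q+1)` from the complement of `G`. -/
def Fq (G : Set (Fin n → ℝ)) (q : ℕ) : Set (Fin n → ℝ) :=
  {x | ENNReal.ofReal (2 / (q + 1)) ≤ EMetric.infEdist x Gᶜ}

lemma isClosed_Fq (G : Set (Fin n → ℝ)) (q : ℕ) : IsClosed (Fq G q) :=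
  isClosed_le continuous_const EMetric.continuous_infEdist

lemma Fq_subset {G : Set (Fin n → ℝ)} {q : ℕ} {x : Fin n → ℝ} (hx : x ∈ Fq G q) :
    closedBall x (1 / (q + 1)) ⊆ G := by
  intro y hy
  by_contra hyG
  have h1 : EMetric.infEdist x Gᶜ ≤ edist x y := EMetric.infEdist_le_edist_of_mem hyG
  have h2 : ENNReal.ofReal (2 / (q + 1)) ≤ ENNReal.ofReal (dist x y) := by
    calc ENNReal.ofReal (2 / (q + 1)) ≤ EMetric.infEdist x Gᶜ := hx
    _ ≤ edist x y := h1
    _ = ENNReal.ofReal (dist x y) := edist_dist x y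
  rw [ENNReal.ofReal_le_ofReal_iff dist_nonneg] at h2
  have h3 : dist x y ≤ 1 / (q + 1) := by rw [dist_comm]; exact mem_closedBall.mp hy
  have h4 : (0 : ℝ) < 1 / (q + 1) := by positivity
  have h5 : (2 : ℝ) / (q + 1) = 2 * (1 / (q + 1)) := by ring
  linarith

lemma Fq_subset_G {G : Set (Fin n → ℝ)} {q : ℕ} {x : Fin n → ℝ} (hx : x ∈ Fq G q) : x ∈ G :=
  Fq_subset hx (mem_closedBall_self (by positivity))

lemma Fq_mono {G : Set (Fin n → ℝ)} {q q' : ℕ} (h : q ≤ q') : Fq G q ⊆ Fq G q' := by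
  intro x hx
  refine le_trans (ENNReal.ofReal_le_ofReal ?_) hx
  apply div_le_div_of_nonneg_left (by norm_num) (by positivity)
  exact_mod_cast by exact_mod_cast Nat.add_le_add_right h 1

lemma exists_Fq {G : Set (Fin n → ℝ)} (hG : IsOpen G) {x : Fin n → ℝ} (hx : x ∈ G) :
    ∃ q0 : ℕ, ∀ q, q0 ≤ q → x ∈ Fq G q := by
  obtain ⟨ε, hε, hball⟩ := Metric.isOpen_iff.mp hG x hx
  have hinf : ENNReal.ofReal ε ≤ EMetric.infEdist x Gᶜ := by
    rw [EMetric.infEdist, EMetric.le_infEdist]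
    intro y hy
    by_contra hlt
    push_neg at hlt
    exact hy (hball (by rwa [mem_ball, dist_comm, ← edist_lt_ofReal]))
  refine ⟨⌈2 / ε⌉₊, fun q hq => ?_⟩
  refine le_trans (ENNReal.ofReal_le_ofReal ?_) hinf
  have h1 : 2 / ε ≤ (q : ℝ) + 1 := by
    calc (2 / ε : ℝ) ≤ (⌈2 / ε⌉₊ : ℝ) := Nat.le_ceil _
    _ ≤ (q : ℝ) := Nat.cast_le.mpr hq
    _ ≤ (q : ℝ) + 1 := by linarith
  rw [div_le_iff₀ (by positivity)]
  calc (2 : ℝ) = (2 / ε) * ε := by field_simp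
  _ ≤ ((q : ℝ) + 1) * ε := by nlinarith
  _ = ε * ((q : ℝ) + 1) := mul_comm _ _

/-- The closed sets in the Baire category argument. -/
def Cpq (f : (Fin n → ℝ) → ℝ) (G : Set (Fin n → ℝ)) (p q : ℕ) : Set (Fin n → ℝ) :=
  Fq G q ∩ {x | ∀ i : Fin n, ∀ t s : ℝ, |t| ≤ 1 / (q + 1) → |s| ≤ 1 / (q + 1) →
    |s * (f (upd x i t) - f x) - t * (f (upd x i s) - f x)| ≤ |t| * |s| / (p + 1)}

lemma contOn_upd {f : (Fin n → ℝ) → ℝ} {G : Set (Fin n → ℝ)} (hf : ContinuousOn f G)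
    {q : ℕ} (i : Fin n) {t : ℝ} (ht : |t| ≤ 1 / (q + 1)) :
    ContinuousOn (fun x => f (upd x i t)) (Fq G q) := by
  apply hf.comp (continuous_upd i t).continuousOn
  intro x hx
  exact Fq_subset hx (mem_closedBall.mpr ((dist_upd_le x i t).trans ht))

lemma isClosed_Cpq {f : (Fin n → ℝ) → ℝ} {G : Set (Fin n → ℝ)} (hf : ContinuousOn f G)
    (p q : ℕ) : IsClosed (Cpq f G p q) := by
  have hrw : Cpq f G p q = Fq G q ∩
      ⋂ (i : Fin n), ⋂ (t : Icc (-(1 / (q + 1) : ℝ)) (1 / (q + 1))),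
        ⋂ (s : Icc (-(1 / (q + 1) : ℝ)) (1 / (q + 1))),
          (Fq G q ∩ {x | |(s : ℝ) * (f (upd x i t) - f x) -
            (t : ℝ) * (f (upd x i s) - f x)| ≤ |(t : ℝ)| * |(s : ℝ)| / (p + 1)}) := by
    ext x
    simp only [Cpq, mem_inter_iff, mem_iInter, mem_setOf_eq, Subtype.forall, mem_Icc]
    constructor
    · rintro ⟨hF, h⟩
      exact ⟨hF, fun i t ht s hs => ⟨hF, h i t s (abs_le.mpr ht) (abs_le.mpr hs)⟩⟩
    · rintro ⟨hF, h⟩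
      exact ⟨hF, fun i t s ht hs => (h i t (abs_le.mp ht) s (abs_le.mp hs)).2⟩
  rw [hrw]
  refine (isClosed_Fq G q).inter (isClosed_iInter fun i => isClosed_iInter fun t =>
    isClosed_iInter fun s => ?_)
  have hts : |(t : ℝ)| ≤ 1 / (q + 1) := abs_le.mpr t.2
  have hss : |(s : ℝ)| ≤ 1 / (q + 1) := abs_le.mpr s.2
  have hcont : ContinuousOn (fun x => |(s : ℝ) * (f (upd x i t) - f x) -
      (t : ℝ) * (f (upd x i s) - f x)|) (Fq G q) := by
    have hfG : ContinuousOn f (Fq G q) := hf.mono (fun x hx => Fq_subset_G hx)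
    exact ((continuousOn_const.mul ((contOn_upd hf i hts).sub hfG)).sub
      (continuousOn_const.mul ((contOn_upd hf i hss).sub hfG))).abs
  have := hcont.preimage_isClosed_of_isClosed (isClosed_Fq G q)
    (isClosed_Iic (a := |(t : ℝ)| * |(s : ℝ)| / (p + 1)))
  exact this

/-- Rephrase the partial derivative hypothesis. -/
lemma hasDerivAt_upd {f : (Fin n → ℝ) → ℝ} {x : Fin n → ℝ} {i : Fin n} {d : ℝ}
    (hd : HasDerivAt (fun t : ℝ => f (Function.update x i t)) d (x i)) :
    HasDerivAt (fun u : ℝ => f (upd x i u)) d 0 := by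
  have h1 : HasDerivAt (fun u : ℝ => x i + u) 1 0 := by
    simpa using (hasDerivAt_id (0 : ℝ)).const_add (x i)
  have h2 : HasDerivAt (fun t : ℝ => f (Function.update x i t)) d ((fun u : ℝ => x i + u) 0) := by
    simpa using hd
  have := h2.comp 0 h1
  simpa [upd, Function.comp, Function.comp_def] using this

lemma ev_bound {f : (Fin n → ℝ) → ℝ} {x : Fin n → ℝ} {i : Fin n} {d : ℝ}
    (hd : HasDerivAt (fun u : ℝ => f (upd x i u)) d 0) {ε : ℝ} (hε : 0 < ε) :
    ∀ᶠ u in 𝓝 (0 : ℝ), |f (upd x i u) - f x - u * d| ≤ ε * |u| := by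
  have h1 := hasDerivAt_iff_isLittleO.mp hd
  have h2 := (Asymptotics.isLittleO_iff.mp h1) hε
  simpa [upd_zero, Real.norm_eq_abs, smul_eq_mul] using h2


lemma exists_mem_Cpq {f : (Fin n → ℝ) → ℝ} {G : Set (Fin n → ℝ)} (hG : IsOpen G)
    {x : Fin n → ℝ} (hx : x ∈ G) {d : Fin n → ℝ}
    (hd : ∀ i, HasDerivAt (fun u : ℝ => f (upd x i u)) (d i) 0) (p : ℕ) :
    ∃ q : ℕ, x ∈ Cpq f G p q := by
  obtain ⟨q0, hq0⟩ := exists_Fq hG hx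
  have hε : (0 : ℝ) < 1 / (2 * (p + 1)) := by positivity
  have hev : ∀ᶠ u in 𝓝 (0 : ℝ), ∀ i,
      |f (upd x i u) - f x - u * d i| ≤ (1 / (2 * ((p : ℝ) + 1))) * |u| :=
    Filter.eventually_all.mpr fun i => ev_bound (hd i) hε
  rw [Metric.eventually_nhds_iff] at hev
  obtain ⟨δ, hδ0, hδ⟩ := hev
  refine ⟨max q0 ⌈1 / δ⌉₊, hq0 _ (le_max_left _ _), ?_⟩
  intro i t s ht hs
  set q := max q0 ⌈1 / δ⌉₊ with hq_def
  have h1 : 1 / δ ≤ (q : ℝ) := le_trans (Nat.le_ceil _) (Nat.cast_le.mpr (le_max_right _ _))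
  have h3 : 1 / δ < (q : ℝ) + 1 := lt_of_le_of_lt h1 (lt_add_one _)
  have h4 : 1 < ((q : ℝ) + 1) * δ := (div_lt_iff₀ hδ0).mp h3
  have hqδ : 1 / ((q : ℝ) + 1) < δ := by
    rw [div_lt_iff₀ (by positivity)]
    linarith [mul_comm ((q : ℝ) + 1) δ]
  have e1 := hδ (y := t) (by rw [Real.dist_eq, sub_zero]; exact lt_of_le_of_lt ht hqδ) i
  have e2 := hδ (y := s) (by rw [Real.dist_eq, sub_zero]; exact lt_of_le_of_lt hs hqδ) i
  have key : s * (f (upd x i t) - f x) - t * (f (upd x i s) - f x)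
      = s * ((f (upd x i t) - f x) - t * d i) - t * ((f (upd x i s) - f x) - s * d i) := by
    ring
  rw [key]
  have hne : ((p : ℝ) + 1) ≠ 0 := by positivity
  calc |s * ((f (upd x i t) - f x) - t * d i) - t * ((f (upd x i s) - f x) - s * d i)|
      ≤ |s * ((f (upd x i t) - f x) - t * d i)| + |t * ((f (upd x i s) - f x) - s * d i)| :=
        abs_sub _ _
    _ = |s| * |(f (upd x i t) - f x) - t * d i| + |t| * |(f (upd x i s) - f x) - s * d i| := by
        rw [abs_mul, abs_mul]
    _ ≤ |s| * ((1 / (2 * ((p : ℝ) + 1))) * |t|) + |t| * ((1 / (2 * ((p : ℝ) + 1))) * |s|) := by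
        refine add_le_add ?_ ?_
        · exact mul_le_mul_of_nonneg_left e1 (abs_nonneg s)
        · exact mul_le_mul_of_nonneg_left e2 (abs_nonneg t)
    _ = |t| * |s| / ((p : ℝ) + 1) := by field_simp; ring

lemma differentiableAt_of_interior {f : (Fin n → ℝ) → ℝ} {G : Set (Fin n → ℝ)} (hG : IsOpen G)
    (hf : ContinuousOn f G) {x : Fin n → ℝ} (hx : x ∈ G) {d : Fin n → ℝ}
    (hd : ∀ i, HasDerivAt (fun u : ℝ => f (upd x i u)) (d i) 0)
    (hint : ∀ p : ℕ, ∃ q : ℕ, x ∈ interior (Cpq f G p q)) :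
    DifferentiableAt ℝ f x := by
  classical
  set L : (Fin n → ℝ) →L[ℝ] ℝ := ∑ i, d i • ContinuousLinearMap.proj i with hL
  have hLapp : ∀ h : Fin n → ℝ, L h = ∑ i, d i * h i := by
    intro h
    simp [hL, ContinuousLinearMap.sum_apply, ContinuousLinearMap.proj_apply, smul_eq_mul]
  refine (HasFDerivAt.differentiableAt (f' := L) ?_)
  rw [hasFDerivAt_iff_isLittleO_nhds_zero, Asymptotics.isLittleO_iff]
  intro c hc
  set ε : ℝ := c / (3 * ((n : ℝ) + 1)) with hε_def
  have hε : 0 < ε := by positivity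
  set p : ℕ := ⌈1 / ε⌉₊ with hp_def
  have hpε : 1 / ((p : ℝ) + 1) ≤ ε := by
    have h1 : 1 / ε ≤ (p : ℝ) + 1 := le_trans (Nat.le_ceil _) (by linarith)
    rw [div_le_iff₀ (by positivity)]
    calc (1 : ℝ) = (1 / ε) * ε := by field_simp
    _ ≤ ((p : ℝ) + 1) * ε := by nlinarith
    _ = ε * ((p : ℝ) + 1) := mul_comm _ _
  obtain ⟨q, hq⟩ := hint p
  obtain ⟨r, hr0, hrball⟩ := Metric.mem_nhds_iff.mp (mem_interior_iff_mem_nhds.mp hq)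
  set δq : ℝ := 1 / ((q : ℝ) + 1) with hδq_def
  have hδq : 0 < δq := by positivity
  -- choose the reference increment s
  have hev : ∀ᶠ u in 𝓝 (0 : ℝ), ∀ i, |f (upd x i u) - f x - u * d i| ≤ ε * |u| :=
    Filter.eventually_all.mpr fun i => ev_bound (hd i) hε
  rw [Metric.eventually_nhds_iff] at hev
  obtain ⟨δ, hδ0, hδ⟩ := hev
  set s : ℝ := min (δ / 2) δq with hs_def
  have hs0 : 0 < s := lt_min (by linarith) hδq
  have hsδq : s ≤ δq := min_le_right _ _
  have hsd : ∀ i, |f (upd x i s) - f x - s * d i| ≤ ε * s := by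
    intro i
    have hsδ : dist s 0 < δ := by
      rw [Real.dist_eq, sub_zero, abs_of_pos hs0]
      exact lt_of_le_of_lt (min_le_left _ _) (by linarith)
    have := hδ hsδ i
    rwa [abs_of_pos hs0] at this
  -- continuity near x
  have hxF : x ∈ Fq G q := (hrball (mem_ball_self hr0)).1
  have hcont : ∀ᶠ y in 𝓝 x, y ∈ Cpq f G p q ∧
      ∀ i, |(f (upd y i s) - f y) - (f (upd x i s) - f x)| ≤ ε * s := by
    refine Filter.Eventually.and
      (Filter.eventually_of_mem (Metric.ball_mem_nhds x hr0) hrball) ?_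
    rw [Filter.eventually_all]
    intro i
    have hxig : upd x i s ∈ G := Fq_subset hxF (mem_closedBall.mpr
      ((dist_upd_le x i s).trans (by rw [abs_of_pos hs0]; exact hsδq)))
    have h1 : ContinuousAt (fun y => f (upd y i s)) x :=
      ContinuousAt.comp (g := f) (f := fun y => upd y i s)
        (hf.continuousAt (hG.mem_nhds hxig)) ((continuous_upd i s).continuousAt)
    have h2 : ContinuousAt f x := hf.continuousAt (hG.mem_nhds hx)
    have h3 : ContinuousAt (fun y => |(f (upd y i s) - f y) - (f (upd x i s) - f x)|) x :=
      ((h1.sub h2).sub continuousAt_const).abs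
    have h3' : Filter.Tendsto (fun y => |(f (upd y i s) - f y) - (f (upd x i s) - f x)|)
        (𝓝 x) (𝓝 0) := by simpa using h3.tendsto
    have h4 : (0 : ℝ) < ε * s := by positivity
    exact (h3'.eventually_lt_const h4).mono fun y hy => hy.le
  rw [Metric.eventually_nhds_iff] at hcont
  obtain ⟨ρ, hρ0, hρ⟩ := hcont
  rw [Metric.eventually_nhds_iff]
  refine ⟨min ρ δq, by positivity, ?_⟩
  intro h hh
  rw [dist_zero_right] at hh
  have hhρ : ‖h‖ < ρ := hh.trans_le (min_le_left _ _)
  have hhδq : ‖h‖ < δq := hh.trans_le (min_le_right _ _)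
  set z : ℕ → (Fin n → ℝ) := fun k j => if (j : ℕ) < k then x j + h j else x j with hz_def
  have hz0 : z 0 = x := by funext j; simp [hz_def]
  have hzn : z n = x + h := by funext j; simp [hz_def, j.isLt]
  have hzdist : ∀ k, dist (z k) x ≤ ‖h‖ := by
    intro k
    rw [dist_pi_le_iff (norm_nonneg h)]
    intro j
    by_cases hj : (j : ℕ) < k
    · simp only [hz_def, if_pos hj, Real.dist_eq, add_sub_cancel_left]
      simpa using norm_le_pi_norm h j
    · simp [hz_def, if_neg hj]
  have hmem : ∀ k, z k ∈ Cpq f G p q ∧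
      ∀ i, |(f (upd (z k) i s) - f (z k)) - (f (upd x i s) - f x)| ≤ ε * s :=
    fun k => hρ (lt_of_le_of_lt (hzdist k) hhρ)
  have hstep : ∀ k, ∀ hk : k < n,
      |f (z (k + 1)) - f (z k) - d ⟨k, hk⟩ * h ⟨k, hk⟩| ≤ 3 * ε * ‖h‖ := by
    intro k hk
    set i : Fin n := ⟨k, hk⟩ with hi_def
    have hupdz : z (k + 1) = upd (z k) i (h i) := by
      funext j
      rcases eq_or_ne j i with rfl | hji
      · simp only [hz_def, upd, Function.update_self, hi_def]
        rw [if_pos (Nat.lt_succ_self k), if_neg (lt_irrefl k)]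
      · have hjk : (j : ℕ) ≠ k := fun hc => hji (Fin.ext (by rw [hc, hi_def]))
        rw [upd, Function.update_of_ne hji]
        simp only [hz_def]
        by_cases hjk' : (j : ℕ) < k
        · rw [if_pos (Nat.lt_succ_of_lt hjk'), if_pos hjk']
        · rw [if_neg (by omega), if_neg hjk']
    obtain ⟨hzC, hzcb⟩ := hmem k
    have hti : |h i| ≤ δq := le_trans (by simpa using norm_le_pi_norm h i) hhδq.le
    rcases eq_or_ne (h i) 0 with h0 | h0
    · rw [hupdz, show (d ⟨k, hk⟩ * h ⟨k, hk⟩ : ℝ) = d i * h i from rfl, h0, upd_zero]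
      simp only [sub_self, mul_zero, sub_zero, abs_zero]
      positivity
    · have hC := hzC.2 i (h i) s hti (by rw [abs_of_pos hs0]; exact hsδq)
      have hcb := hzcb i
      have hxd := hsd i
      rw [hupdz]
      set t := h i with ht_def
      set Ft := f (upd (z k) i t) - f (z k) with hFt
      set Fs := f (upd (z k) i s) - f (z k) with hFs
      set Gs := f (upd x i s) - f x with hGs
      have habs : |s| = s := abs_of_pos hs0
      have hC' : |s * Ft - t * Fs| ≤ ε * (|t| * s) := by
        refine hC.trans ?_
        rw [habs]
        calc |t| * s / ((p : ℝ) + 1) = (|t| * s) * (1 / ((p : ℝ) + 1)) := by ring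
        _ ≤ (|t| * s) * ε := mul_le_mul_of_nonneg_left hpε (by positivity)
        _ = ε * (|t| * s) := mul_comm _ _
      have hid : s * (Ft - d i * t) = (s * Ft - t * Fs) + t * (Fs - Gs) + t * (Gs - s * d i) := by
        ring
      have hb2 : |t * (Fs - Gs)| ≤ |t| * (ε * s) := by
        rw [abs_mul]; exact mul_le_mul_of_nonneg_left hcb (abs_nonneg t)
      have hb3 : |t * (Gs - s * d i)| ≤ |t| * (ε * s) := by
        rw [abs_mul]; exact mul_le_mul_of_nonneg_left hxd (abs_nonneg t)
      have hsum : |s * (Ft - d i * t)| ≤ 3 * ε * (|t| * s) := by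
        rw [hid]
        calc |(s * Ft - t * Fs) + t * (Fs - Gs) + t * (Gs - s * d i)|
            ≤ |(s * Ft - t * Fs) + t * (Fs - Gs)| + |t * (Gs - s * d i)| := abs_add_le _ _
          _ ≤ |s * Ft - t * Fs| + |t * (Fs - Gs)| + |t * (Gs - s * d i)| := by
              linarith [abs_add_le (s * Ft - t * Fs) (t * (Fs - Gs))]
          _ ≤ ε * (|t| * s) + |t| * (ε * s) + |t| * (ε * s) := by linarith
          _ = 3 * ε * (|t| * s) := by ring
      have hdiv : |Ft - d i * t| ≤ 3 * ε * |t| := by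
        have h1 : s * |Ft - d i * t| ≤ s * (3 * ε * |t|) := by
          calc s * |Ft - d i * t| = |s * (Ft - d i * t)| := by rw [abs_mul, habs]
          _ ≤ 3 * ε * (|t| * s) := hsum
          _ = s * (3 * ε * |t|) := by ring
        exact le_of_mul_le_mul_left h1 hs0
      calc |f (upd (z k) i t) - f (z k) - d i * t| = |Ft - d i * t| := by rw [hFt]
      _ ≤ 3 * ε * |t| := hdiv
      _ ≤ 3 * ε * ‖h‖ := by
          refine mul_le_mul_of_nonneg_left ?_ (by positivity)
          rw [ht_def]
          simpa using norm_le_pi_norm h i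
  have hsum_eq : f (x + h) - f x - L h =
      ∑ k ∈ Finset.range n, (f (z (k + 1)) - f (z k) -
        (if hm : k < n then d ⟨k, hm⟩ * h ⟨k, hm⟩ else 0)) := by
    rw [Finset.sum_sub_distrib]
    rw [Finset.sum_range_sub (fun k => f (z k)) n]
    rw [hz0, hzn, hLapp]
    congr 1
    rw [← Fin.sum_univ_eq_sum_range (fun m => if hm : m < n then d ⟨m, hm⟩ * h ⟨m, hm⟩ else 0) n]
    exact Finset.sum_congr rfl fun i _ => by simp [i.isLt]
  have hne : ((n : ℝ) + 1) ≠ 0 := by positivity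
  calc ‖f (x + h) - f x - L h‖ = |f (x + h) - f x - L h| := Real.norm_eq_abs _
  _ ≤ ∑ k ∈ Finset.range n, |f (z (k + 1)) - f (z k) -
        (if hm : k < n then d ⟨k, hm⟩ * h ⟨k, hm⟩ else 0)| := by
      rw [hsum_eq]; exact Finset.abs_sum_le_sum_abs _ _
  _ ≤ ∑ _k ∈ Finset.range n, (3 * ε * ‖h‖) := by
      refine Finset.sum_le_sum fun k hk => ?_
      rw [dif_pos (Finset.mem_range.mp hk)]
      exact hstep k (Finset.mem_range.mp hk)
  _ = (n : ℝ) * (3 * ε * ‖h‖) := by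
      rw [Finset.sum_const, Finset.card_range, nsmul_eq_mul]
  _ ≤ c * ‖h‖ := by
      have h2 : (n : ℝ) / ((n : ℝ) + 1) ≤ 1 := by
        rw [div_le_one (by positivity)]; linarith
      have key : (n : ℝ) * (3 * ε) ≤ c := by
        calc (n : ℝ) * (3 * ε) = c * ((n : ℝ) / ((n : ℝ) + 1)) := by
              rw [hε_def]; field_simp
        _ ≤ c * 1 := mul_le_mul_of_nonneg_left h2 hc.le
        _ = c := mul_one c
      calc (n : ℝ) * (3 * ε * ‖h‖) = ((n : ℝ) * (3 * ε)) * ‖h‖ := by ring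
      _ ≤ c * ‖h‖ := mul_le_mul_of_nonneg_right key (norm_nonneg h)

end MeagrePartialsAux

open MeagrePartialsAux

theorem meagre_partials_exist_not_differentiable
    (n : ℕ) (G : Set (Fin n → ℝ)) (hG : IsOpen G)
    (f : (Fin n → ℝ) → ℝ) (hf : ContinuousOn f G) :
    IsMeagre {x ∈ G |
      (∀ i : Fin n, ∃ d : ℝ, HasDerivAt (fun t : ℝ => f (Function.update x i t)) d (x i)) ∧
      ¬ DifferentiableAt ℝ f x} := by
  have hsub : {x ∈ G |
      (∀ i : Fin n, ∃ d : ℝ, HasDerivAt (fun t : ℝ => f (Function.update x i t)) d (x i)) ∧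
      ¬ DifferentiableAt ℝ f x} ⊆
      ⋃ p : ℕ, ⋃ q : ℕ, (Cpq f G p q \ interior (Cpq f G p q)) := by
    rintro x ⟨hxG, hpart, hndiff⟩
    choose d hd using hpart
    have hd' : ∀ i, HasDerivAt (fun u : ℝ => f (upd x i u)) (d i) 0 :=
      fun i => hasDerivAt_upd (hd i)
    have hni : ¬ ∀ p : ℕ, ∃ q : ℕ, x ∈ interior (Cpq f G p q) :=
      fun hI => hndiff (differentiableAt_of_interior hG hf hxG hd' hI)
    push_neg at hni
    obtain ⟨p, hp⟩ := hni
    obtain ⟨q, hq⟩ := exists_mem_Cpq hG hxG hd' p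
    exact mem_iUnion.mpr ⟨p, mem_iUnion.mpr ⟨q, hq, hp q⟩⟩
  refine IsMeagre.mono hsub ?_
  apply isMeagre_iUnion; intro p; apply isMeagre_iUnion; intro q
  have hcl := isClosed_Cpq hf p q
  have hclosed : IsClosed (Cpq f G p q \ interior (Cpq f G p q)) := hcl.sdiff isOpen_interior
  have hnd : IsNowhereDense (Cpq f G p q \ interior (Cpq f G p q)) := by
    rw [hclosed.isNowhereDense_iff, eq_empty_iff_forall_notMem]
    intro y hy
    exact (interior_subset hy).2 (interior_mono diff_subset hy)
  rw [isMeagre_iff_countable_union_isNowhereDense]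
  exact ⟨{Cpq f G p q \ interior (Cpq f G p q)}, by simpa using hnd,
    countable_singleton _, by simp⟩
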